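/- arXiv:1203.3982 — 2 statements merged into one kernel-verified Lean document; each statement's English description precedes it below -/
import Mathlib

section
/- Let α ≥ 0 and consider the ODE system ċ = a c, ȧ(2c + α) = −4a²c − αa² for complex-valued functions c(t), a(t) with 2c(t) + α ≠ 0. Then along any solution, the quantity c² + αc satisfies d²/dt²(c² + αc) = 0, i.e., c(t)² + αc(t) is an affine function of t. -/
/-- Along solutions of ċ = ac, ȧ(2c+α) = −4a²c − αa², the quantity c² + αc is affine in t. -/
theorem c_sq_plus_alpha_c_affine (α : ℝ) (hα : 0 ≤ α)
    (I : Set ℝ) (hI : Convex ℝ I)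
    (c a a' : ℝ → ℂ)
    (hc : ∀ t ∈ I, HasDerivAt c (a t * c t) t)
    (ha : ∀ t ∈ I, HasDerivAt a (a' t) t)
    (hne : ∀ t ∈ I, 2 * c t + (α : ℂ) ≠ 0)
    (heq : ∀ t ∈ I, a' t * (2 * c t + (α : ℂ))
      = -4 * (a t) ^ 2 * c t - (α : ℂ) * (a t) ^ 2) :
    ∃ A B : ℂ, ∀ t ∈ I, (c t) ^ 2 + (α : ℂ) * c t = A + B * t := by
  rcases Set.eq_empty_or_nonempty I with hIe | ⟨t₀, ht₀⟩
  · exact ⟨0, 0, fun t ht => by simp [hIe] at ht⟩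
  set h : ℝ → ℂ := fun t => (2 * c t + (α : ℂ)) * (a t * c t) with hh
  have hder : ∀ t ∈ I, HasDerivAt h 0 t := by
    intro t ht
    have H := (((hc t ht).const_mul 2).add_const (α : ℂ)).mul ((ha t ht).mul (hc t ht))
    refine (H : HasDerivAt h _ t).congr_deriv ?_
    have := heq t ht
    simp only [Pi.mul_apply]
    linear_combination (c t) * this
  -- h is constant on I
  have hconst : ∀ t ∈ I, h t = h t₀ := by
    intro t ht
    have := hI.norm_image_sub_le_of_norm_hasDerivWithin_le
      (f := h) (f' := fun _ => (0 : ℂ)) (C := 0)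
      (fun x hx => (hder x hx).hasDerivWithinAt)
      (fun x hx => by simp) ht₀ ht
    have h1 : ‖h t - h t₀‖ ≤ 0 := by simpa using this
    have := norm_le_zero_iff.mp h1
    exact sub_eq_zero.mp this
  refine ⟨c t₀ ^ 2 + (α : ℂ) * c t₀ - h t₀ * t₀, h t₀, fun t ht => ?_⟩
  -- f t = c t ^2 + α c t - h t₀ * t has derivative 0 on I
  have hder2 : ∀ t ∈ I, HasDerivAt (fun t => c t * c t + (α : ℂ) * c t - h t₀ * t) 0 t := by
    intro t ht
    have hlin : HasDerivAt (fun s : ℝ => h t₀ * (s : ℂ)) (h t₀) t := by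
      simpa using (Complex.ofRealCLM.hasDerivAt (x := t)).const_mul (h t₀)
    have H := (((hc t ht).mul (hc t ht)).add ((hc t ht).const_mul (α : ℂ))).sub hlin
    refine (H : HasDerivAt (fun t => c t * c t + (α : ℂ) * c t - h t₀ * t) _ t).congr_deriv ?_
    rw [← hconst t ht]
    simp only [hh]
    ring
  have := hI.norm_image_sub_le_of_norm_hasDerivWithin_le
    (f := fun t => c t * c t + (α : ℂ) * c t - h t₀ * t) (f' := fun _ => (0 : ℂ)) (C := 0)
    (fun x hx => (hder2 x hx).hasDerivWithinAt)
    (fun x hx => by simp) ht₀ ht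
  have h0 : c t * c t + (α : ℂ) * c t - h t₀ * t = c t₀ * c t₀ + (α : ℂ) * c t₀ - h t₀ * t₀ := by
    have h1 : ‖(c t * c t + (α : ℂ) * c t - h t₀ * t) -
        (c t₀ * c t₀ + (α : ℂ) * c t₀ - h t₀ * t₀)‖ ≤ 0 := by simpa using this
    exact sub_eq_zero.mp (norm_le_zero_iff.mp h1)
  linear_combination h0
end

section
/- Let α = 0 and consider the system ċ = ac, ȧ·2c = −4a²c on an interval where c(t) ≠ 0. Then c(t)² is affine in t: c(t)² = c(0)² + 2c(0)²a(0)·t. Consequently the geodesic from c(0)=1 to c(1)=r, with 0 < r real, in the pure-scaling submanifold is given by c(t) = √(1 + (r²−1)t). -/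
/-- If f has derivative 0 at every point of [0,1], it is constant on [0,1]. -/
lemma const_of_deriv_zero_icc (f : ℝ → ℝ)
    (hf : ∀ t ∈ Set.Icc (0 : ℝ) 1, HasDerivAt f 0 t) :
    ∀ t ∈ Set.Icc (0 : ℝ) 1, f t = f 0 := by
  apply constant_of_has_deriv_right_zero
  · intro t ht
    exact (hf t ht).continuousAt.continuousWithinAt
  · intro t ht
    exact (hf t (Set.mem_Icc_of_Ico ht)).hasDerivWithinAt

/-- For α = 0 and the pure-scaling system ċ = ac, ȧ·2c = −4a²c with c > 0 on [0,1]: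
    c(t)² = c(0)² + 2c(0)²a(0)t, and the geodesic from c(0)=1 to c(1)=r (r > 0)
    is c(t) = √(1 + (r²−1)t). -/
theorem pure_scaling_geodesic
    (c a a' : ℝ → ℝ)
    (hcpos : ∀ t ∈ Set.Icc (0 : ℝ) 1, 0 < c t)
    (hc : ∀ t ∈ Set.Icc (0 : ℝ) 1, HasDerivAt c (a t * c t) t)
    (ha : ∀ t ∈ Set.Icc (0 : ℝ) 1, HasDerivAt a (a' t) t)
    (heq : ∀ t ∈ Set.Icc (0 : ℝ) 1, a' t * (2 * c t) = -4 * (a t) ^ 2 * c t) :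
    (∀ t ∈ Set.Icc (0 : ℝ) 1, (c t) ^ 2 = (c 0) ^ 2 + 2 * (c 0) ^ 2 * a 0 * t) ∧
    (∀ r : ℝ, 0 < r → c 0 = 1 → c 1 = r →
      ∀ t ∈ Set.Icc (0 : ℝ) 1, c t = Real.sqrt (1 + (r ^ 2 - 1) * t)) := by
  have h0 : (0:ℝ) ∈ Set.Icc (0:ℝ) 1 := by norm_num
  -- a' = -2 a² on the interval
  have ha' : ∀ t ∈ Set.Icc (0 : ℝ) 1, a' t = -2 * (a t) ^ 2 := by
    intro t ht
    have hcne : c t ≠ 0 := (hcpos t ht).ne'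
    have h2c : (2 : ℝ) * c t ≠ 0 := by positivity
    refine mul_right_cancel₀ h2c ?_
    rw [heq t ht]; ring
  -- h t = a t * c t ^ 2 is constant
  have hconst : ∀ t ∈ Set.Icc (0 : ℝ) 1, a t * (c t) ^ 2 = a 0 * (c 0) ^ 2 := by
    apply const_of_deriv_zero_icc
    intro t ht
    have h1 : HasDerivAt (fun s => a s * (c s) ^ 2)
        (a' t * (c t) ^ 2 + a t * (2 * c t ^ (2-1) * (a t * c t))) t :=
      (ha t ht).mul ((hc t ht).pow 2)
    convert h1 using 1
    rw [ha' t ht]; ring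
  -- part 1
  have part1 : ∀ t ∈ Set.Icc (0 : ℝ) 1,
      (c t) ^ 2 = (c 0) ^ 2 + 2 * (c 0) ^ 2 * a 0 * t := by
    have key : ∀ t ∈ Set.Icc (0 : ℝ) 1,
        (c t) ^ 2 - 2 * (c 0) ^ 2 * a 0 * t
          = (c 0) ^ 2 - 2 * (c 0) ^ 2 * a 0 * 0 := by
      apply const_of_deriv_zero_icc
      intro t ht
      have h1 : HasDerivAt (fun s => (c s) ^ 2 - 2 * (c 0) ^ 2 * a 0 * s)
          (2 * c t ^ (2-1) * (a t * c t) - 2 * (c 0) ^ 2 * a 0 * 1) t :=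
        ((hc t ht).pow 2).sub (((hasDerivAt_id t).const_mul (2 * (c 0) ^ 2 * a 0)))
      convert h1 using 1
      norm_num
      linear_combination (-2 : ℝ) * hconst t ht
    intro t ht
    have := key t ht
    linarith
  refine ⟨part1, ?_⟩
  intro r hr hc0 hc1 t ht
  have h2a0 : 2 * a 0 = r ^ 2 - 1 := by
    have := part1 1 (by norm_num)
    rw [hc0, hc1] at this
    nlinarith
  have hsq : (c t) ^ 2 = 1 + (r ^ 2 - 1) * t := by
    have := part1 t ht
    rw [hc0] at this
    linear_combination this + t * h2a0
  have := hcpos t ht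
  rw [← hsq, Real.sqrt_sq this.le]
end
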